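/- In the first-order tangent algebra A = K[X]⧸((X - C s)(X - C t)), the multiplication satisfies the fundamental relation: for all v, w ∈ A, w * v = α(w) • v - algebraMap K A (α(w) * β(v)) + β(v) • w. -/

import Mathlib

open Polynomial

/-- The defining ideal of the first-order tangent algebra `K_{(t,s)}`. -/
noncomputable abbrev tIdeal (K : Type*) [CommRing K] (t s : K) : Ideal (Polynomial K) :=
  Ideal.span {(X - C s) * (X - C t)}

/-- The first-order tangent algebra `K_{(t,s)} = K[X] ⧸ ((X - C s) * (X - C t))`. -/
abbrev TangentAlgebra₁ (K : Type*) [CommRing K] (t s : K) :=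
  Polynomial K ⧸ tIdeal K t s

/-- The fundamental relation of the first-order tangent algebra:
`w * v = α(w) • v - algebraMap K A (α(w) * β(v)) + β(v) • w`. -/
theorem fundamental_relation (K : Type*) [CommRing K] (t s : K)
    (α β : TangentAlgebra₁ K t s →ₐ[K] K)
    (hα : ∀ P : Polynomial K, α (Ideal.Quotient.mk (tIdeal K t s) P) = P.eval s)
    (hβ : ∀ P : Polynomial K, β (Ideal.Quotient.mk (tIdeal K t s) P) = P.eval t) :
    ∀ v w : TangentAlgebra₁ K t s,
      w * v = α w • v - algebraMap K (TangentAlgebra₁ K t s) (α w * β v) + β v • w := by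
  intro v w
  obtain ⟨P, rfl⟩ := Ideal.Quotient.mk_surjective (I := tIdeal K t s) v
  obtain ⟨Q, rfl⟩ := Ideal.Quotient.mk_surjective (I := tIdeal K t s) w
  rw [hα, hβ]
  have key : (Q - C (Q.eval s)) * (P - C (P.eval t)) ∈ tIdeal K t s := by
    apply Ideal.mem_span_singleton.2
    exact mul_dvd_mul (dvd_iff_isRoot.2 (by simp [IsRoot]))
      (dvd_iff_isRoot.2 (by simp [IsRoot]))
  have h := (Ideal.Quotient.eq_zero_iff_mem).2 key
  have : (Ideal.Quotient.mk (tIdeal K t s)) ((Q - C (Q.eval s)) * (P - C (P.eval t))) = 0 := h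
  rw [map_mul, map_sub, map_sub] at this
  have hsmul : ∀ (a : K) (x : TangentAlgebra₁ K t s),
      a • x = algebraMap K (TangentAlgebra₁ K t s) a * x := fun a x => Algebra.smul_def a x
  have halg : ∀ a : K, algebraMap K (TangentAlgebra₁ K t s) a
      = Ideal.Quotient.mk (tIdeal K t s) (C a) := fun a => rfl
  rw [hsmul, hsmul, halg, halg, halg]
  simp only [map_mul]
  ring_nf
  ring_nf at this
  linear_combination this
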